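/- Let π be the Poisson measure with σ-finite intensity μ on configuration space. For f ∈ L¹(μ) ∩ L^∞(μ), the function F(γ) := exp(γ(f)) satisfies Ent_π(F) = π(F) · ∫ (f e^f - e^f + 1) dμ, where Ent_π(F) = π(F log F) - π(F) log π(F). -/

import Mathlib

open MeasureTheory Real

private lemma aux_exp_sub_one (y : ℝ) : |Real.exp y - 1| ≤ |y| * Real.exp |y| := by
  rcases le_or_gt 0 y with hy | hy
  · rw [abs_of_nonneg hy]
    have h1 : 1 - y ≤ Real.exp (-y) := by
      have := Real.add_one_le_exp (-y); linarith
    have h2 : Real.exp y * (1 - y) ≤ 1 := by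
      have := mul_le_mul_of_nonneg_left h1 (Real.exp_pos y).le
      rwa [← Real.exp_add, add_neg_cancel, Real.exp_zero] at this
    have h3 : Real.exp y - 1 ≤ y * Real.exp y := by nlinarith
    have h0 : 0 ≤ Real.exp y - 1 := by
      have := Real.add_one_le_exp y; linarith
    rw [abs_of_nonneg h0]; exact h3
  · rw [abs_of_neg hy]
    have h0 : Real.exp y - 1 < 0 := by
      have := Real.exp_lt_one_iff.mpr hy; linarith
    rw [abs_of_neg h0]
    have h1 : 1 + y ≤ Real.exp y := by linarith [Real.add_one_le_exp y]
    have h2 : (1 : ℝ) ≤ Real.exp (-y) := by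
      rw [Real.one_le_exp_iff]; linarith
    nlinarith [Real.exp_pos (-y)]

private lemma aux_mul_exp_t {t : ℝ} (y : ℝ) (ht : t ∈ Metric.ball (1 : ℝ) (1/2)) :
    |y * Real.exp (t * y)| ≤ Real.exp (3 * y) + 2 := by
  rw [Metric.mem_ball, Real.dist_eq] at ht
  have ht1 : 1/2 < t := by cases abs_lt.mp ht; linarith
  have ht2 : t < 3/2 := by cases abs_lt.mp ht; linarith
  rcases le_or_gt 0 y with hy | hy
  · have h1 : y ≤ Real.exp y := by have := Real.add_one_le_exp y; linarith
    have h2 : Real.exp (t * y) ≤ Real.exp (2 * y) := by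
      apply Real.exp_le_exp.mpr; nlinarith
    have : y * Real.exp (t * y) ≤ Real.exp y * Real.exp (2 * y) := by
      have hE := (Real.exp_pos (t*y)).le
      calc y * Real.exp (t * y) ≤ Real.exp y * Real.exp (t * y) :=
            mul_le_mul_of_nonneg_right h1 hE
        _ ≤ Real.exp y * Real.exp (2 * y) :=
            mul_le_mul_of_nonneg_left h2 (Real.exp_pos y).le
    rw [abs_of_nonneg (mul_nonneg hy (Real.exp_pos _).le)]
    rw [← Real.exp_add] at this
    calc y * Real.exp (t * y) ≤ Real.exp (y + 2 * y) := this
      _ = Real.exp (3 * y) := by ring_nf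
      _ ≤ Real.exp (3 * y) + 2 := by linarith
  · have h1 : -y ≤ 2 * Real.exp (-y / 2) := by
      have := Real.add_one_le_exp (-y / 2); nlinarith
    have h2 : Real.exp (t * y) ≤ Real.exp (y / 2) := by
      apply Real.exp_le_exp.mpr; nlinarith
    have h3 : -y * Real.exp (t * y) ≤ 2 * Real.exp (-y / 2) * Real.exp (y / 2) := by
      have hE := (Real.exp_pos (t*y)).le
      calc -y * Real.exp (t * y) ≤ 2 * Real.exp (-y/2) * Real.exp (t * y) :=
            mul_le_mul_of_nonneg_right h1 hE
        _ ≤ 2 * Real.exp (-y/2) * Real.exp (y / 2) := by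
            apply mul_le_mul_of_nonneg_left h2
            positivity
    have h4 : 2 * Real.exp (-y / 2) * Real.exp (y / 2) = 2 := by
      have hz : -y / 2 + y / 2 = 0 := by ring
      rw [mul_assoc, ← Real.exp_add, hz, Real.exp_zero, mul_one]
    rw [abs_mul, abs_of_neg hy, abs_of_pos (Real.exp_pos _)]
    have := Real.exp_pos (3 * y)
    linarith [h3, h4.symm ▸ h3]

/-- The entropy identity for exponential functionals of a Poisson measure `pm`
with σ-finite intensity `μ`, where `pm` is characterized by its Laplace
transform. -/
theorem stmt_13 {E : Type*} [MeasurableSpace E] (μ : Measure E) [SigmaFinite μ]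
    (pm : Measure (Measure E)) [IsProbabilityMeasure pm]
    (hLaplace : ∀ g : E → ℝ, Integrable g μ → (∃ M : ℝ, ∀ x, |g x| ≤ M) →
      ∫ γ, Real.exp (∫ x, g x ∂γ) ∂pm =
        Real.exp (∫ x, (Real.exp (g x) - 1) ∂μ))
    (f : E → ℝ) (hf1 : Integrable f μ) (hfb : ∃ M : ℝ, ∀ x, |f x| ≤ M) :
    (∫ γ, (Real.exp (∫ x, f x ∂γ)) * Real.log (Real.exp (∫ x, f x ∂γ)) ∂pm)
        - (∫ γ, Real.exp (∫ x, f x ∂γ) ∂pm)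
            * Real.log (∫ γ, Real.exp (∫ x, f x ∂γ) ∂pm)
      = (∫ γ, Real.exp (∫ x, f x ∂γ) ∂pm)
          * ∫ x, (f x * Real.exp (f x) - Real.exp (f x) + 1) ∂μ := by
  obtain ⟨M, hM⟩ := hfb
  set If : Measure E → ℝ := fun γ => ∫ x, f x ∂γ with hIf
  -- Laplace transform along t • f
  have key : ∀ t : ℝ, ∫ γ, Real.exp (t * If γ) ∂pm
      = Real.exp (∫ x, (Real.exp (t * f x) - 1) ∂μ) := by
    intro t
    have h := hLaplace (fun x => t * f x) (hf1.const_mul t)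
      ⟨|t| * M, fun x => by
        rw [abs_mul]
        exact mul_le_mul_of_nonneg_left (hM x) (abs_nonneg t)⟩
    simpa [integral_const_mul] using h
  -- Integrability of γ ↦ exp (t * If γ)
  have hInt : ∀ t : ℝ, Integrable (fun γ => Real.exp (t * If γ)) pm := by
    intro t
    by_contra h
    have := key t
    rw [integral_undef h] at this
    exact (Real.exp_pos _).ne' this.symm
  -- a.e. measurability of If
  have hIfm : AEMeasurable If pm := by
    have h1 : AEMeasurable (fun γ => Real.exp (1 * If γ)) pm :=
      (hInt 1).aemeasurable
    have h2 : AEMeasurable (fun γ => Real.log (Real.exp (1 * If γ))) pm :=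
      Real.measurable_log.comp_aemeasurable h1
    simpa [Real.log_exp] using h2
  -- the pm-side derivative
  have hderivF : HasDerivAt (fun t => ∫ γ, Real.exp (t * If γ) ∂pm)
      (∫ γ, If γ * Real.exp (1 * If γ) ∂pm) 1 := by
    have h := hasDerivAt_integral_of_dominated_loc_of_deriv_le
      (F := fun t γ => Real.exp (t * If γ))
      (F' := fun t γ => If γ * Real.exp (t * If γ))
      (x₀ := (1 : ℝ)) (bound := fun γ => Real.exp (3 * If γ) + 2)
      (μ := pm) (Metric.ball_mem_nhds _ (by norm_num : (0:ℝ) < 1/2))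
      (Filter.Eventually.of_forall fun t => (hInt t).aestronglyMeasurable)
      (hInt 1)
      ((hIfm.mul ((hInt 1).aemeasurable)).aestronglyMeasurable)
      (Filter.Eventually.of_forall fun γ => fun t ht => by
        rw [Real.norm_eq_abs]; exact aux_mul_exp_t (If γ) ht)
      ((hInt 3).add (integrable_const 2))
      (Filter.Eventually.of_forall fun γ => fun t _ => by
        have h := (hasDerivAt_mul_const (If γ)).exp (x := t)
        simpa [mul_comm] using h)
    exact h.2
  -- the μ-side integrability facts
  have hexpf_m : AEStronglyMeasurable (fun x => Real.exp (f x)) μ :=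
    Real.continuous_exp.comp_aestronglyMeasurable hf1.aestronglyMeasurable
  have hInt1 : Integrable (fun x => f x * Real.exp (f x)) μ := by
    apply Integrable.mono' (hf1.abs.const_mul (Real.exp M))
      (hf1.aestronglyMeasurable.mul hexpf_m)
    filter_upwards with x
    simp only [Real.norm_eq_abs, Pi.mul_apply, abs_mul, Real.abs_exp]
    rw [mul_comm]
    apply mul_le_mul_of_nonneg_right _ (abs_nonneg _)
    exact Real.exp_le_exp.mpr ((le_abs_self _).trans (hM x))
  have hInt2 : Integrable (fun x => Real.exp (f x) - 1) μ := by
    apply Integrable.mono' (hf1.abs.const_mul (Real.exp M))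
      (hexpf_m.sub aestronglyMeasurable_const)
    filter_upwards with x
    rw [Real.norm_eq_abs]
    calc |Real.exp (f x) - 1| ≤ |f x| * Real.exp |f x| := aux_exp_sub_one (f x)
      _ ≤ |f x| * Real.exp M :=
          mul_le_mul_of_nonneg_left (Real.exp_le_exp.mpr (hM x)) (abs_nonneg _)
      _ = Real.exp M * |f x| := mul_comm _ _
  -- the μ-side derivative
  have hderivH : HasDerivAt (fun t => ∫ x, (Real.exp (t * f x) - 1) ∂μ)
      (∫ x, f x * Real.exp (1 * f x) ∂μ) 1 := by
    have hexpInt : ∀ t : ℝ, Integrable (fun x => Real.exp (t * f x) - 1) μ := by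
      intro t
      apply Integrable.mono' ((hf1.abs.const_mul (|t| * Real.exp (|t| * M))))
        ((Real.continuous_exp.comp_aestronglyMeasurable
          (hf1.aestronglyMeasurable.const_mul t)).sub aestronglyMeasurable_const)
      filter_upwards with x
      rw [Real.norm_eq_abs]
      calc |Real.exp (t * f x) - 1| ≤ |t * f x| * Real.exp |t * f x| :=
            aux_exp_sub_one (t * f x)
        _ ≤ |t * f x| * Real.exp (|t| * M) := by
            apply mul_le_mul_of_nonneg_left _ (abs_nonneg _)
            apply Real.exp_le_exp.mpr
            rw [abs_mul]
            exact mul_le_mul_of_nonneg_left (hM x) (abs_nonneg t)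
        _ = |t| * Real.exp (|t| * M) * |f x| := by rw [abs_mul]; ring
    have h := hasDerivAt_integral_of_dominated_loc_of_deriv_le
      (F := fun t x => Real.exp (t * f x) - 1)
      (F' := fun t x => f x * Real.exp (t * f x))
      (x₀ := (1 : ℝ)) (bound := fun x => Real.exp (2 * M) * |f x|)
      (μ := μ) (Metric.ball_mem_nhds _ (by norm_num : (0:ℝ) < 1/2))
      (Filter.Eventually.of_forall fun t => (hexpInt t).aestronglyMeasurable)
      (hexpInt 1)
      (hf1.aestronglyMeasurable.mul
        (Real.continuous_exp.comp_aestronglyMeasurable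
          (hf1.aestronglyMeasurable.const_mul 1)))
      (Filter.Eventually.of_forall fun x => fun t ht => by
        rw [Metric.mem_ball, Real.dist_eq] at ht
        have ht1 : 1/2 < t := by cases abs_lt.mp ht; linarith
        have ht2 : t < 3/2 := by cases abs_lt.mp ht; linarith
        have hMx := hM x
        have hM0 : 0 ≤ M := (abs_nonneg _).trans hMx
        rw [Real.norm_eq_abs, abs_mul, abs_of_pos (Real.exp_pos _), mul_comm]
        apply mul_le_mul_of_nonneg_right _ (abs_nonneg _)
        apply Real.exp_le_exp.mpr
        have : t * f x ≤ |t| * |f x| := by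
          calc t * f x ≤ |t * f x| := le_abs_self _
            _ = |t| * |f x| := abs_mul t (f x)
        have habs : |t| ≤ 3/2 := by rw [abs_of_pos (by linarith : (0:ℝ) < t)]; linarith
        nlinarith [abs_nonneg (f x), abs_nonneg t])
      (hf1.abs.const_mul (Real.exp (2 * M)))
      (Filter.Eventually.of_forall fun x => fun t _ => by
        have h := ((hasDerivAt_mul_const (f x)).exp (x := t)).sub_const 1
        simpa [mul_comm] using h)
    exact h.2
  -- derivative of the exponential of the μ-side
  have hderivG : HasDerivAt (fun t => Real.exp (∫ x, (Real.exp (t * f x) - 1) ∂μ))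
      (Real.exp (∫ x, (Real.exp (1 * f x) - 1) ∂μ) * ∫ x, f x * Real.exp (1 * f x) ∂μ)
      1 := hderivH.exp
  -- equality of the two functions, hence of derivatives
  have hFG : (fun t => ∫ γ, Real.exp (t * If γ) ∂pm)
      = fun t => Real.exp (∫ x, (Real.exp (t * f x) - 1) ∂μ) := funext key
  have hderivF' : HasDerivAt (fun t => Real.exp (∫ x, (Real.exp (t * f x) - 1) ∂μ))
      (∫ γ, If γ * Real.exp (1 * If γ) ∂pm) 1 := hFG ▸ hderivF
  have key2 : ∫ γ, If γ * Real.exp (If γ) ∂pm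
      = Real.exp (∫ x, (Real.exp (f x) - 1) ∂μ) * ∫ x, f x * Real.exp (f x) ∂μ := by
    have h := hderivF'.unique hderivG
    simpa [one_mul] using h
  have key1 : ∫ γ, Real.exp (If γ) ∂pm = Real.exp (∫ x, (Real.exp (f x) - 1) ∂μ) := by
    have h := key 1
    simpa [one_mul] using h
  -- final algebra
  have hlog : (fun γ => Real.exp (If γ) * Real.log (Real.exp (If γ)))
      = fun γ => If γ * Real.exp (If γ) := by
    funext γ; rw [Real.log_exp]; ring
  have hRHS : ∫ x, (f x * Real.exp (f x) - Real.exp (f x) + 1) ∂μ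
      = (∫ x, f x * Real.exp (f x) ∂μ) - ∫ x, (Real.exp (f x) - 1) ∂μ := by
    rw [← integral_sub hInt1 hInt2]
    congr 1; funext x; ring
  show (∫ γ, Real.exp (If γ) * Real.log (Real.exp (If γ)) ∂pm)
      - (∫ γ, Real.exp (If γ) ∂pm) * Real.log (∫ γ, Real.exp (If γ) ∂pm)
      = (∫ γ, Real.exp (If γ) ∂pm) * ∫ x, (f x * Real.exp (f x) - Real.exp (f x) + 1) ∂μ
  rw [hlog, key2, key1, hRHS, Real.log_exp]
  ring
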